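/- The spherical support system K̇ = K × Ω, α̇ = α × Ω, β̇ = β × Ω, γ̇ = γ × Ω with K = (𝓘 + aα⊗α + bβ⊗β + cγ⊗γ)Ω possesses the first integrals (K,K), (K,α), (K,β), (K,γ), and the kinetic energy ½(Ω,𝓘Ω) + (a/2)(Ω,α)² + (b/2)(Ω,β)² + (c/2)(Ω,γ)²; all are constant along solutions. -/

import Mathlib

open Matrix

private lemma hasDerivAt_dot3 {f g : ℝ → Fin 3 → ℝ} {f' g' : Fin 3 → ℝ} {t : ℝ}
    (hf : HasDerivAt f f' t) (hg : HasDerivAt g g' t) :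
    HasDerivAt (fun s => f s ⬝ᵥ g s) (f' ⬝ᵥ g t + f t ⬝ᵥ g') t := by
  have hfi := fun i => hasDerivAt_pi.mp hf i
  have hgi := fun i => hasDerivAt_pi.mp hg i
  have h := (((hfi 0).mul (hgi 0)).add ((hfi 1).mul (hgi 1))).add ((hfi 2).mul (hgi 2))
  have heq : (fun s => f s ⬝ᵥ g s)
      = fun s => (f s 0 * g s 0 + f s 1 * g s 1) + f s 2 * g s 2 := by
    funext s; simp [dotProduct, Fin.sum_univ_three]
  rw [heq]
  convert h using 1
  · rfl
  · rfl
  · rfl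
  simp [dotProduct, Fin.sum_univ_three]; ring

/-- **First integrals of the spherical support system.** Along solutions of
`K̇ = K × Ω`, `α̇ = α × Ω`, `β̇ = β × Ω`, `γ̇ = γ × Ω` with
`K = (𝓘 + aα⊗α + bβ⊗β + cγ⊗γ)Ω`, the quantities `(K,K)`, `(K,α)`, `(K,β)`,
`(K,γ)` and the kinetic energy
`½(Ω,𝓘Ω) + (a/2)(Ω,α)² + (b/2)(Ω,β)² + (c/2)(Ω,γ)²` are conserved. -/
theorem spherical_support_first_integrals
    (I : Matrix (Fin 3) (Fin 3) ℝ) (hIsymm : I.IsSymm) (hIpos : I.PosDef)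
    (a b c : ℝ)
    (Ω α β γ K Ωdot : ℝ → Fin 3 → ℝ)
    (hΩ : ∀ t, HasDerivAt Ω (Ωdot t) t)
    (hK : ∀ t, K t = I *ᵥ Ω t + (a * (α t ⬝ᵥ Ω t)) • α t +
      (b * (β t ⬝ᵥ Ω t)) • β t + (c * (γ t ⬝ᵥ Ω t)) • γ t)
    (hKeq : ∀ t, HasDerivAt K (crossProduct (K t) (Ω t)) t)
    (hα : ∀ t, HasDerivAt α (crossProduct (α t) (Ω t)) t)
    (hβ : ∀ t, HasDerivAt β (crossProduct (β t) (Ω t)) t)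
    (hγ : ∀ t, HasDerivAt γ (crossProduct (γ t) (Ω t)) t) :
    (∀ t, HasDerivAt (fun s => K s ⬝ᵥ K s) 0 t) ∧
    (∀ t, HasDerivAt (fun s => K s ⬝ᵥ α s) 0 t) ∧
    (∀ t, HasDerivAt (fun s => K s ⬝ᵥ β s) 0 t) ∧
    (∀ t, HasDerivAt (fun s => K s ⬝ᵥ γ s) 0 t) ∧
    (∀ t, HasDerivAt (fun s => (1 / 2) * (Ω s ⬝ᵥ (I *ᵥ Ω s)) +
      (a / 2) * (Ω s ⬝ᵥ α s) ^ 2 + (b / 2) * (Ω s ⬝ᵥ β s) ^ 2 +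
      (c / 2) * (Ω s ⬝ᵥ γ s) ^ 2) 0 t) := by
  have cross3 : ∀ (u v w : Fin 3 → ℝ),
      (crossProduct u v) ⬝ᵥ w + u ⬝ᵥ (crossProduct w v) = 0 := by
    intro u v w
    simp [crossProduct, dotProduct, Fin.sum_univ_three]
    ring
  refine ⟨?_, ?_, ?_, ?_, ?_⟩
  · intro t
    have h := hasDerivAt_dot3 (hKeq t) (hKeq t)
    convert h using 1
    have := cross3 (K t) (Ω t) (K t)
    linarith
  · intro t
    have h := hasDerivAt_dot3 (hKeq t) (hα t)
    convert h using 1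
    have := cross3 (K t) (Ω t) (α t)
    linarith
  · intro t
    have h := hasDerivAt_dot3 (hKeq t) (hβ t)
    convert h using 1
    have := cross3 (K t) (Ω t) (β t)
    linarith
  · intro t
    have h := hasDerivAt_dot3 (hKeq t) (hγ t)
    convert h using 1
    have := cross3 (K t) (Ω t) (γ t)
    linarith
  · intro t
    have hIΩ : HasDerivAt (fun s => I *ᵥ Ω s) (I *ᵥ Ωdot t) t := by
      apply hasDerivAt_pi.mpr
      intro i
      have h : HasDerivAt (fun s => ∑ j, I i j * Ω s j) (∑ j, I i j * Ωdot t j) t :=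
        HasDerivAt.fun_sum fun j _ => ((hasDerivAt_pi.mp (hΩ t)) j).const_mul (I i j)
      simpa [Matrix.mulVec, dotProduct] using h
    have hsymm : ∀ u v : Fin 3 → ℝ, u ⬝ᵥ (I *ᵥ v) = v ⬝ᵥ (I *ᵥ u) := by
      intro u v
      rw [Matrix.dotProduct_mulVec, ← Matrix.mulVec_transpose, hIsymm.eq,
        dotProduct_comm]
    -- direct derivative of the energy
    set e1 : ℝ := (1/2) * (Ωdot t ⬝ᵥ (I *ᵥ Ω t) + Ω t ⬝ᵥ (I *ᵥ Ωdot t))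
          + (a/2) * (2 * (Ω t ⬝ᵥ α t) ^ 1 * (Ωdot t ⬝ᵥ α t + Ω t ⬝ᵥ crossProduct (α t) (Ω t)))
          + (b/2) * (2 * (Ω t ⬝ᵥ β t) ^ 1 * (Ωdot t ⬝ᵥ β t + Ω t ⬝ᵥ crossProduct (β t) (Ω t)))
          + (c/2) * (2 * (Ω t ⬝ᵥ γ t) ^ 1 * (Ωdot t ⬝ᵥ γ t + Ω t ⬝ᵥ crossProduct (γ t) (Ω t))) with he1
    have h1 : HasDerivAt (fun s => (1 / 2) * (Ω s ⬝ᵥ (I *ᵥ Ω s)) +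
        (a / 2) * (Ω s ⬝ᵥ α s) ^ 2 + (b / 2) * (Ω s ⬝ᵥ β s) ^ 2 +
        (c / 2) * (Ω s ⬝ᵥ γ s) ^ 2) e1 t := by
      rw [he1]
      exact ((((hasDerivAt_dot3 (hΩ t) hIΩ).const_mul (1/2)).add
        (((hasDerivAt_dot3 (hΩ t) (hα t)).pow 2).const_mul (a/2))).add
        (((hasDerivAt_dot3 (hΩ t) (hβ t)).pow 2).const_mul (b/2))).add
        (((hasDerivAt_dot3 (hΩ t) (hγ t)).pow 2).const_mul (c/2))
    -- the energy equals ½ (K ⬝ Ω)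
    have hE : (fun s => (1 / 2) * (Ω s ⬝ᵥ (I *ᵥ Ω s)) +
        (a / 2) * (Ω s ⬝ᵥ α s) ^ 2 + (b / 2) * (Ω s ⬝ᵥ β s) ^ 2 +
        (c / 2) * (Ω s ⬝ᵥ γ s) ^ 2) = fun s => (1/2) * (K s ⬝ᵥ Ω s) := by
      funext s
      rw [hK s]
      simp only [add_dotProduct, smul_dotProduct, smul_eq_mul]
      rw [dotProduct_comm (α s) (Ω s), dotProduct_comm (β s) (Ω s),
        dotProduct_comm (γ s) (Ω s), dotProduct_comm (I *ᵥ Ω s) (Ω s)]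
      ring
    have h2 : HasDerivAt (fun s => (1 / 2) * (Ω s ⬝ᵥ (I *ᵥ Ω s)) +
        (a / 2) * (Ω s ⬝ᵥ α s) ^ 2 + (b / 2) * (Ω s ⬝ᵥ β s) ^ 2 +
        (c / 2) * (Ω s ⬝ᵥ γ s) ^ 2)
        ((1/2) * ((crossProduct (K t) (Ω t)) ⬝ᵥ Ω t + K t ⬝ᵥ Ωdot t)) t := by
      rw [hE]
      exact (hasDerivAt_dot3 (hKeq t) (hΩ t)).const_mul (1/2)
    have hcz : (crossProduct (K t) (Ω t)) ⬝ᵥ Ω t = 0 := by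
      rw [dotProduct_comm]; exact dot_cross_self (K t) (Ω t)
    -- e1 = K t ⬝ᵥ Ωdot t
    have he1' : e1 = K t ⬝ᵥ Ωdot t := by
      rw [he1, hK t]
      simp only [add_dotProduct, smul_dotProduct, smul_eq_mul]
      rw [dot_cross_self (α t) (Ω t), dot_cross_self (β t) (Ω t), dot_cross_self (γ t) (Ω t),
        hsymm (Ωdot t) (Ω t), dotProduct_comm (I *ᵥ Ω t) (Ωdot t), hsymm (Ωdot t) (Ω t),
        dotProduct_comm (α t) (Ωdot t), dotProduct_comm (β t) (Ωdot t),
        dotProduct_comm (γ t) (Ωdot t), dotProduct_comm (α t) (Ω t),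
        dotProduct_comm (β t) (Ω t), dotProduct_comm (γ t) (Ω t)]
      ring
    have huniq : e1 = (1/2) * ((crossProduct (K t) (Ω t)) ⬝ᵥ Ω t + K t ⬝ᵥ Ωdot t) :=
      h1.unique h2
    rw [hcz, he1'] at huniq
    have hz : e1 = 0 := by rw [he1']; linarith [he1' ▸ huniq]
    exact hz ▸ h1
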